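/- If φ is an untangled first-order formula of mt-logic and X a team such that dom(X) ∩ BV(φ) = ∅ and FV(φ) ⊆ dom(X), then M,X ⊨_mt φ if and only if X = ⟦φ⟧^M_{dom(X)}. -/

import Mathlib

set_option linter.unusedSectionVars false

namespace Paper

/-- A first-order vocabulary (signature): function and relation symbols with arities. -/
structure Sig where
  Func : Type
  arF : Func → ℕ
  Rel : Type
  arR : Rel → ℕ

/-- A τ-structure with universe `α`. -/
structure Struc (σ : Sig) (α : Type) where
  interpF : (f : σ.Func) → (Fin (σ.arF f) → α) → α
  interpR : (r : σ.Rel) → (Fin (σ.arR r) → α) → Prop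

/-- First-order terms; variables are natural numbers. -/
inductive Term (σ : Sig) where
  | var : ℕ → Term σ
  | func : (f : σ.Func) → (Fin (σ.arF f) → Term σ) → Term σ

/-- Interpretation of a term under an assignment. -/
def Term.eval {σ : Sig} {α : Type} (𝕄 : Struc σ α) (s : ℕ → α) : Term σ → α
  | .var x => s x
  | .func f ts => 𝕄.interpF f (fun i => (ts i).eval 𝕄 s)

/-- Variables occurring in a term. -/
def Term.fv {σ : Sig} : Term σ → Finset ℕ
  | .var x => {x}
  | .func _ ts => Finset.univ.biUnion fun i => (ts i).fv

/-- A team: a finite set of variables (the domain) together with a set of assignments.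
Assignments are encoded as total functions `ℕ → α` that take the value `default`
outside the domain of the team (so that an assignment `s : dom(X) → M` is identified
with its extension by `default`). -/
structure Team (α : Type) [Inhabited α] where
  dom : Finset ℕ
  assignments : Set (ℕ → α)
  supported : ∀ s ∈ assignments, ∀ y ∉ dom, s y = default

variable {σ : Sig} {α : Type} [Inhabited α]

/-- The team `∃x X`: domain `dom(X) \ {x}`, consisting of all (supported) `s` such that
`s[a/x] ∈ X` for some `a` (which subsumes the clause "or `s ∈ X`" in the encoding). -/
def Team.eexists (x : ℕ) (X : Team α) : Team α where
  dom := X.dom.erase x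
  assignments := {s | (∀ y ∉ X.dom.erase x, s y = default) ∧
    ∃ a : α, Function.update s x a ∈ X.assignments}
  supported := fun _ hs => hs.1

/-- The team `∀x X`: domain `dom(X) \ {x}`, consisting of all (supported) `s` such that
`s[a/x] ∈ X` for all `a ∈ M` (when `x ∈ dom(X)`), or `s ∈ X` (when `x ∉ dom(X)`). -/
def Team.eforall (x : ℕ) (X : Team α) : Team α where
  dom := X.dom.erase x
  assignments := {s | (∀ y ∉ X.dom.erase x, s y = default) ∧
    if x ∈ X.dom then ∀ a : α, Function.update s x a ∈ X.assignments
    else s ∈ X.assignments}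
  supported := fun _ hs => hs.1

/-- Iterated application `∃x̄ X`. -/
def Team.eexistsN (l : List ℕ) (X : Team α) : Team α := l.foldr Team.eexists X

/-- Iterated application `∀x̄ X`. -/
def Team.eforallN (l : List ℕ) (X : Team α) : Team α := l.foldr Team.eforall X

/-- Restriction of an assignment to a finite set of variables (default outside). -/
def restrictFun (d : Finset ℕ) (s : ℕ → α) : ℕ → α := fun y => if y ∈ d then s y else default

/-- The restriction `X ↾ V` of a team, with domain `dom(X) ∩ V`. -/
def Team.restrict (X : Team α) (V : Finset ℕ) : Team α where
  dom := X.dom ∩ V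
  assignments := {t | ∃ s ∈ X.assignments, t = restrictFun (X.dom ∩ V) s}
  supported := by rintro t ⟨s, _, rfl⟩ y hy; simp only [restrictFun]; exact if_neg hy

/-- The full team on a domain `d`: all (supported) assignments. -/
def Team.full (α : Type) [Inhabited α] (d : Finset ℕ) : Team α where
  dom := d
  assignments := {s | ∀ y ∉ d, s y = default}
  supported := fun _ hs => hs

/-- The complement team `X^c`: all assignments with domain `dom(X)` not in `X`. -/
def Team.compl (X : Team α) : Team α where
  dom := X.dom
  assignments := {s | (∀ y ∉ X.dom, s y = default) ∧ s ∉ X.assignments}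
  supported := fun _ hs => hs.1

/-- Union of two teams. -/
def Team.unionT (X Y : Team α) : Team α where
  dom := X.dom ∪ Y.dom
  assignments := X.assignments ∪ Y.assignments
  supported := by
    rintro s (hs | hs) y hy
    · exact X.supported s hs y (fun h => hy (Finset.mem_union_left _ h))
    · exact Y.supported s hs y (fun h => hy (Finset.mem_union_right _ h))

/-- The team `X[M/x] = {s[a/x] | s ∈ X, a ∈ M}`. -/
def Team.subM (X : Team α) (x : ℕ) : Team α where
  dom := insert x X.dom
  assignments := {t | ∃ s ∈ X.assignments, ∃ a : α, t = Function.update s x a}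
  supported := by
    rintro t ⟨s, hs, a, rfl⟩ y hy
    have hyx : y ≠ x := fun h => hy (h ▸ Finset.mem_insert_self x X.dom)
    rw [Function.update_of_ne hyx]
    exact X.supported s hs y (fun h => hy (Finset.mem_insert_of_mem h))

/-- The team `X[f/x] = {s[f(s)/x] | s ∈ X}` for `f : X → M`. -/
def Team.subf (X : Team α) (x : ℕ) (f : (ℕ → α) → α) : Team α where
  dom := insert x X.dom
  assignments := {t | ∃ s ∈ X.assignments, t = Function.update s x (f s)}
  supported := by
    rintro t ⟨s, hs, rfl⟩ y hy
    have hyx : y ≠ x := fun h => hy (h ▸ Finset.mem_insert_self x X.dom)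
    rw [Function.update_of_ne hyx]
    exact X.supported s hs y (fun h => hy (Finset.mem_insert_of_mem h))

/-- The team `X[F/x] = {s[a/x] | s ∈ X, a ∈ F(s)}` for `F : X → P(M)`. -/
def Team.subF (X : Team α) (x : ℕ) (F : (ℕ → α) → Set α) : Team α where
  dom := insert x X.dom
  assignments := {t | ∃ s ∈ X.assignments, ∃ a ∈ F s, t = Function.update s x a}
  supported := by
    rintro t ⟨s, hs, a, _, rfl⟩ y hy
    have hyx : y ≠ x := fun h => hy (h ▸ Finset.mem_insert_self x X.dom)
    rw [Function.update_of_ne hyx]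
    exact X.supported s hs y (fun h => hy (Finset.mem_insert_of_mem h))

/-- Simultaneous update `s[v̄/x̄]` of an assignment along a list of variables. -/
def updVec (s : ℕ → α) (l : List ℕ) (v : Fin l.length → α) : ℕ → α :=
  fun y => if h : y ∈ l then v ⟨l.idxOf y, List.idxOf_lt_length_iff.mpr h⟩ else s y

theorem updVec_not_mem (s : ℕ → α) (l : List ℕ) (v : Fin l.length → α) {y : ℕ} (h : y ∉ l) :
    updVec s l v y = s y := dif_neg h

/-- The team `X[M/x̄]`. -/
def Team.subMVec (X : Team α) (l : List ℕ) : Team α where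
  dom := X.dom ∪ l.toFinset
  assignments := {t | ∃ s ∈ X.assignments, ∃ v : Fin l.length → α, t = updVec s l v}
  supported := by
    rintro t ⟨s, hs, v, rfl⟩ y hy
    rw [updVec_not_mem s l v (fun h => hy (Finset.mem_union_right _ (List.mem_toFinset.mpr h)))]
    exact X.supported s hs y (fun h => hy (Finset.mem_union_left _ h))

/-- The team `X[F/x̄] = {s[ā/x̄] | s ∈ X, ā ∈ F(s)}` for a set-valued `F`. -/
def Team.subFVec (X : Team α) (l : List ℕ) (F : (ℕ → α) → Set (Fin l.length → α)) :
    Team α where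
  dom := X.dom ∪ l.toFinset
  assignments := {t | ∃ s ∈ X.assignments, ∃ v ∈ F s, t = updVec s l v}
  supported := by
    rintro t ⟨s, hs, v, _, rfl⟩ y hy
    rw [updVec_not_mem s l v (fun h => hy (Finset.mem_union_right _ (List.mem_toFinset.mpr h)))]
    exact X.supported s hs y (fun h => hy (Finset.mem_union_left _ h))

/-- The team `Qx̄ Y = {s : dom(Y)∖{x̄} → M | Y_s(x̄) ∈ Q_M}` for a (local) generalized
quantifier `Q_M` of type `⟨k⟩` where `k` is the length of `x̄`. -/
def Team.qapp (l : List ℕ) (QM : Set (Set (Fin l.length → α))) (Y : Team α) : Team α where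
  dom := Y.dom \ l.toFinset
  assignments := {s | (∀ y ∉ Y.dom \ l.toFinset, s y = default) ∧
    {v : Fin l.length → α | updVec s l v ∈ Y.assignments} ∈ QM}
  supported := fun _ hs => hs.1

/-- `Qx Y` for a (local) generalized quantifier of type `⟨1⟩`. -/
def Team.q1app (x : ℕ) (QM : Set (Set α)) (Y : Team α) : Team α where
  dom := Y.dom.erase x
  assignments := {s | (∀ y ∉ Y.dom.erase x, s y = default) ∧
    {a : α | Function.update s x a ∈ Y.assignments} ∈ QM}
  supported := fun _ hs => hs.1

/-- The team `{ε}` consisting of just the empty assignment. -/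
def epsTeam (α : Type) [Inhabited α] : Team α where
  dom := ∅
  assignments := {fun _ => default}
  supported := by rintro s rfl y _; rfl

/-- `rel(X) ⊆ M^n`: the relation corresponding to a team, with `dom(X)` enumerated in
increasing order. -/
def Team.relSetN (X : Team α) (n : ℕ) (h : X.dom.card = n) : Set (Fin n → α) :=
  {v | ∃ s ∈ X.assignments, ∀ i, v i = s (X.dom.orderEmbOfFin h i)}

end Paper

namespace Paper

/-- Formulas of mt-logic: literals, internal connectives `⩓`/`⩔` (`iand`/`ior`),
external connectives `∧`/`∨` (`eand`/`eor`), and quantifiers. -/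
inductive MForm (σ : Sig) where
  | rel : (r : σ.Rel) → (Fin (σ.arR r) → Term σ) → MForm σ
  | nrel : (r : σ.Rel) → (Fin (σ.arR r) → Term σ) → MForm σ
  | eq : Term σ → Term σ → MForm σ
  | neq : Term σ → Term σ → MForm σ
  | iand : MForm σ → MForm σ → MForm σ
  | ior : MForm σ → MForm σ → MForm σ
  | eand : MForm σ → MForm σ → MForm σ
  | eor : MForm σ → MForm σ → MForm σ
  | ex : ℕ → MForm σ → MForm σ
  | all : ℕ → MForm σ → MForm σ

variable {σ : Sig} {α : Type} [Inhabited α]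

/-- Free variables of an mt-formula. -/
def MForm.fv : MForm σ → Finset ℕ
  | .rel _ ts | .nrel _ ts => Finset.univ.biUnion fun i => (ts i).fv
  | .eq t u | .neq t u => t.fv ∪ u.fv
  | .iand φ ψ | .ior φ ψ | .eand φ ψ | .eor φ ψ => φ.fv ∪ ψ.fv
  | .ex x φ | .all x φ => φ.fv.erase x

/-- Bound variables of an mt-formula. -/
def MForm.bv : MForm σ → Finset ℕ
  | .rel _ _ | .nrel _ _ | .eq _ _ | .neq _ _ => ∅
  | .iand φ ψ | .ior φ ψ | .eand φ ψ | .eor φ ψ => φ.bv ∪ ψ.bv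
  | .ex x φ | .all x φ => insert x φ.bv

/-- All variables occurring in an mt-formula (free, bound, or in terms). -/
def MForm.vars : MForm σ → Finset ℕ
  | .rel _ ts | .nrel _ ts => Finset.univ.biUnion fun i => (ts i).fv
  | .eq t u | .neq t u => t.fv ∪ u.fv
  | .iand φ ψ | .ior φ ψ | .eand φ ψ | .eor φ ψ => φ.vars ∪ ψ.vars
  | .ex x φ | .all x φ => insert x φ.vars

/-- An mt-formula is first-order if it contains no external connective `∧`/`∨`. -/
def MForm.isFO : MForm σ → Prop
  | .eand _ _ | .eor _ _ => False
  | .iand φ ψ | .ior φ ψ => φ.isFO ∧ ψ.isFO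
  | .ex _ φ | .all _ φ => φ.isFO
  | _ => True

/-- No quantifier `Qx` occurs within the scope of another quantifier `Q'x`. -/
def MForm.noRebind : MForm σ → Prop
  | .rel _ _ | .nrel _ _ | .eq _ _ | .neq _ _ => True
  | .iand φ ψ | .ior φ ψ | .eand φ ψ | .eor φ ψ => φ.noRebind ∧ ψ.noRebind
  | .ex x φ | .all x φ => x ∉ φ.bv ∧ φ.noRebind

/-- A formula is untangled if no quantifier `Qx` appears in the scope of another
quantifier `Q'x` and no variable is both free and bound. -/
def MForm.untangled (φ : MForm σ) : Prop := φ.noRebind ∧ Disjoint φ.fv φ.bv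

/-- Ordinary Tarskian satisfaction of an mt-formula by a single assignment
(both internal and external connectives are read classically). -/
def MForm.tsat (𝕄 : Struc σ α) : (ℕ → α) → MForm σ → Prop
  | s, .rel r ts => 𝕄.interpR r fun i => (ts i).eval 𝕄 s
  | s, .nrel r ts => ¬ 𝕄.interpR r fun i => (ts i).eval 𝕄 s
  | s, .eq t u => t.eval 𝕄 s = u.eval 𝕄 s
  | s, .neq t u => t.eval 𝕄 s ≠ u.eval 𝕄 s
  | s, .iand φ ψ => φ.tsat 𝕄 s ∧ ψ.tsat 𝕄 s
  | s, .ior φ ψ => φ.tsat 𝕄 s ∨ ψ.tsat 𝕄 s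
  | s, .eand φ ψ => φ.tsat 𝕄 s ∧ ψ.tsat 𝕄 s
  | s, .eor φ ψ => φ.tsat 𝕄 s ∨ ψ.tsat 𝕄 s
  | s, .ex x φ => ∃ a : α, φ.tsat 𝕄 (Function.update s x a)
  | s, .all x φ => ∀ a : α, φ.tsat 𝕄 (Function.update s x a)

/-- The semantic value `⟦φ⟧^𝕄_{d}`: the team with domain `d` of all assignments
satisfying `φ` in the Tarskian sense. -/
def SemVal (𝕄 : Struc σ α) (d : Finset ℕ) (φ : MForm σ) : Team α where
  dom := d
  assignments := {s | (∀ y ∉ d, s y = default) ∧ φ.tsat 𝕄 s}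
  supported := fun _ hs => hs.1

/-- Team satisfaction for mt-logic. -/
def MSat (𝕄 : Struc σ α) : MForm σ → Team α → Prop
  | .rel r ts, X => ∀ s : ℕ → α, (∀ y ∉ X.dom, s y = default) →
      (s ∈ X.assignments ↔ 𝕄.interpR r fun i => (ts i).eval 𝕄 s)
  | .nrel r ts, X => ∀ s : ℕ → α, (∀ y ∉ X.dom, s y = default) →
      (s ∈ X.assignments ↔ ¬ 𝕄.interpR r fun i => (ts i).eval 𝕄 s)
  | .eq t u, X => ∀ s : ℕ → α, (∀ y ∉ X.dom, s y = default) →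
      (s ∈ X.assignments ↔ t.eval 𝕄 s = u.eval 𝕄 s)
  | .neq t u, X => ∀ s : ℕ → α, (∀ y ∉ X.dom, s y = default) →
      (s ∈ X.assignments ↔ t.eval 𝕄 s ≠ u.eval 𝕄 s)
  | .iand φ ψ, X => ∃ Y Z : Team α, Y.dom = X.dom ∧ Z.dom = X.dom ∧
      X.assignments = Y.assignments ∩ Z.assignments ∧ MSat 𝕄 φ Y ∧ MSat 𝕄 ψ Z
  | .ior φ ψ, X => ∃ Y Z : Team α, Y.dom = X.dom ∧ Z.dom = X.dom ∧
      X.assignments = Y.assignments ∪ Z.assignments ∧ MSat 𝕄 φ Y ∧ MSat 𝕄 ψ Z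
  | .eand φ ψ, X => MSat 𝕄 φ X ∧ MSat 𝕄 ψ X
  | .eor φ ψ, X => MSat 𝕄 φ X ∨ MSat 𝕄 ψ X
  | .ex x φ, X => ∃ Y : Team α, x ∈ Y.dom ∧ Team.eexists x Y = Team.eexists x X ∧ MSat 𝕄 φ Y
  | .all x φ, X => ∃ Y : Team α, x ∈ Y.dom ∧ Team.eforall x Y = Team.eexists x X ∧ MSat 𝕄 φ Y

/-- Iterated existential quantification `∃w̄ φ`. -/
def MForm.exN (l : List ℕ) (φ : MForm σ) : MForm σ := l.foldr MForm.ex φ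

/-- Iterated universal quantification `∀w̄ φ`. -/
def MForm.allN (l : List ℕ) (φ : MForm σ) : MForm σ := l.foldr MForm.all φ

/-- The formula `⊤_{w̄} = ∃w̄ (w₀ = w₀ ∨ w₀ ≠ w₀)` with a designated `w₀ ∈ w̄`
(here `∨` is the external disjunction). -/
def TopW (l : List ℕ) (w₀ : ℕ) : MForm σ :=
  MForm.exN l (MForm.eor (MForm.eq (.var w₀) (.var w₀)) (MForm.neq (.var w₀) (.var w₀)))

/-- `⊤_{w̄}` with `w₀` taken to be the first variable of `w̄`. -/
def Top (l : List ℕ) : MForm σ := TopW l l.headI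

end Paper

namespace Paper

section Helpers

variable {σ : Sig} {α : Type} [Inhabited α]

theorem Team.ext' {X Y : Team α} (h1 : X.dom = Y.dom)
    (h2 : X.assignments = Y.assignments) : X = Y := by
  cases X; cases Y; simp_all

theorem eexists_self (X : Team α) (x : ℕ) (hx : x ∉ X.dom) :
    Team.eexists x X = X := by
  have hd : X.dom.erase x = X.dom := Finset.erase_eq_of_notMem hx
  apply Team.ext'
  · simp [Team.eexists, hd]
  · ext s
    simp only [Team.eexists, hd, Set.mem_setOf_eq]
    constructor
    · rintro ⟨hsupp, a, ha⟩
      have hax : a = default := by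
        have := X.supported _ ha x hx
        simpa using this
      have hsx : s x = default := hsupp x hx
      rwa [hax, ← hsx, Function.update_eq_self] at ha
    · intro hs
      refine ⟨X.supported s hs, default, ?_⟩
      have hsx : s x = default := X.supported s hs x hx
      rwa [← hsx, Function.update_eq_self]

theorem eexists_semval (𝕄 : Struc σ α) (d : Finset ℕ) (x : ℕ) (hx : x ∉ d) (φ : MForm σ) :
    Team.eexists x (SemVal 𝕄 (insert x d) φ) = SemVal 𝕄 d (.ex x φ) := by
  have hd : (insert x d).erase x = d := Finset.erase_insert hx
  apply Team.ext'
  · simp [Team.eexists, SemVal, hd]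
  · ext s
    simp only [Team.eexists, SemVal, hd, Set.mem_setOf_eq, MForm.tsat]
    constructor
    · rintro ⟨hsupp, a, _, hts⟩
      exact ⟨hsupp, a, hts⟩
    · rintro ⟨hsupp, a, hts⟩
      refine ⟨hsupp, a, ?_, hts⟩
      intro y hy
      have hyx : y ≠ x := fun h => hy (h ▸ Finset.mem_insert_self x d)
      rw [Function.update_of_ne hyx]
      exact hsupp y (fun h => hy (Finset.mem_insert_of_mem h))

theorem eforall_semval (𝕄 : Struc σ α) (d : Finset ℕ) (x : ℕ) (hx : x ∉ d) (φ : MForm σ) :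
    Team.eforall x (SemVal 𝕄 (insert x d) φ) = SemVal 𝕄 d (.all x φ) := by
  have hd : (insert x d).erase x = d := Finset.erase_insert hx
  apply Team.ext'
  · simp [Team.eforall, SemVal, hd]
  · ext s
    simp only [Team.eforall, SemVal, hd, Set.mem_setOf_eq, MForm.tsat,
      if_pos (Finset.mem_insert_self x d)]
    constructor
    · rintro ⟨hsupp, h⟩
      exact ⟨hsupp, fun a => (h a).2⟩
    · rintro ⟨hsupp, h⟩
      refine ⟨hsupp, fun a => ⟨?_, h a⟩⟩
      intro y hy
      have hyx : y ≠ x := fun h' => hy (h' ▸ Finset.mem_insert_self x d)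
      rw [Function.update_of_ne hyx]
      exact hsupp y (fun h' => hy (Finset.mem_insert_of_mem h'))

theorem eq_semval_iff (𝕄 : Struc σ α) (X : Team α) (φ : MForm σ) :
    X = SemVal 𝕄 X.dom φ ↔
      ∀ s : ℕ → α, (∀ y ∉ X.dom, s y = default) → (s ∈ X.assignments ↔ φ.tsat 𝕄 s) := by
  constructor
  · intro h s hsupp
    have h2 : X.assignments = {s | (∀ y ∉ X.dom, s y = default) ∧ φ.tsat 𝕄 s} :=
      congrArg Team.assignments h
    rw [h2]
    exact ⟨fun h' => h'.2, fun h' => ⟨hsupp, h'⟩⟩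
  · intro h
    refine Team.ext' rfl ?_
    ext s
    simp only [SemVal, Set.mem_setOf_eq]
    constructor
    · intro hs; exact ⟨X.supported s hs, (h s (X.supported s hs)).mp hs⟩
    · rintro ⟨hs1, hs2⟩; exact (h s hs1).mpr hs2

end Helpers

/-- STATEMENT 8: If `φ` is an untangled first-order formula of mt-logic and `X` a team
such that `dom(X) ∩ BV(φ) = ∅` and `FV(φ) ⊆ dom(X)`, then `M,X ⊨_mt φ` iff
`X = ⟦φ⟧^M_{dom(X)}`. -/
theorem msat_untangled_fo {σ : Sig} {α : Type} [Inhabited α] (𝕄 : Struc σ α)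
    (φ : MForm σ) (X : Team α) (hFO : φ.isFO) (hUnt : φ.untangled)
    (hBV : Disjoint X.dom φ.bv) (hfv : φ.fv ⊆ X.dom) :
    MSat 𝕄 φ X ↔ X = SemVal 𝕄 X.dom φ := by
  induction φ generalizing X with
  | rel r ts => exact Iff.symm (eq_semval_iff 𝕄 X _)
  | nrel r ts => exact Iff.symm (eq_semval_iff 𝕄 X _)
  | eq t u => exact Iff.symm (eq_semval_iff 𝕄 X _)
  | neq t u => exact Iff.symm (eq_semval_iff 𝕄 X _)
  | eand φ ψ ihφ ihψ => exact hFO.elim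
  | eor φ ψ ihφ ihψ => exact hFO.elim
  | iand φ ψ ihφ ihψ =>
    obtain ⟨⟨hnφ, hnψ⟩, hdisj⟩ := hUnt
    have hUφ : φ.untangled :=
      ⟨hnφ, hdisj.mono Finset.subset_union_left Finset.subset_union_left⟩
    have hUψ : ψ.untangled :=
      ⟨hnψ, hdisj.mono Finset.subset_union_right Finset.subset_union_right⟩
    have hBφ : Disjoint X.dom φ.bv := hBV.mono_right Finset.subset_union_left
    have hBψ : Disjoint X.dom ψ.bv := hBV.mono_right Finset.subset_union_right
    have hfφ : φ.fv ⊆ X.dom := fun y hy => hfv (Finset.mem_union_left _ hy)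
    have hfψ : ψ.fv ⊆ X.dom := fun y hy => hfv (Finset.mem_union_right _ hy)
    constructor
    · rintro ⟨Y, Z, hYd, hZd, hXa, hY, hZ⟩
      have hYeq := (ihφ Y hFO.1 hUφ (by rw [hYd]; exact hBφ) (by rw [hYd]; exact hfφ)).mp hY
      have hZeq := (ihψ Z hFO.2 hUψ (by rw [hZd]; exact hBψ) (by rw [hZd]; exact hfψ)).mp hZ
      have hYa : Y.assignments = {s | (∀ y ∉ X.dom, s y = default) ∧ φ.tsat 𝕄 s} := by
        rw [← hYd]; exact congrArg Team.assignments hYeq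
      have hZa : Z.assignments = {s | (∀ y ∉ X.dom, s y = default) ∧ ψ.tsat 𝕄 s} := by
        rw [← hZd]; exact congrArg Team.assignments hZeq
      refine Team.ext' rfl ?_
      rw [hXa, hYa, hZa]
      ext s
      simp only [SemVal, Set.mem_inter_iff, Set.mem_setOf_eq, MForm.tsat]
      tauto
    · intro hX
      refine ⟨SemVal 𝕄 X.dom φ, SemVal 𝕄 X.dom ψ, rfl, rfl, ?_,
        (ihφ (SemVal 𝕄 X.dom φ) hFO.1 hUφ hBφ hfφ).mpr rfl, (ihψ (SemVal 𝕄 X.dom ψ) hFO.2 hUψ hBψ hfψ).mpr rfl⟩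
      rw [congrArg Team.assignments hX]
      ext s
      simp only [SemVal, Set.mem_inter_iff, Set.mem_setOf_eq, MForm.tsat]
      tauto
  | ior φ ψ ihφ ihψ =>
    obtain ⟨⟨hnφ, hnψ⟩, hdisj⟩ := hUnt
    have hUφ : φ.untangled :=
      ⟨hnφ, hdisj.mono Finset.subset_union_left Finset.subset_union_left⟩
    have hUψ : ψ.untangled :=
      ⟨hnψ, hdisj.mono Finset.subset_union_right Finset.subset_union_right⟩
    have hBφ : Disjoint X.dom φ.bv := hBV.mono_right Finset.subset_union_left
    have hBψ : Disjoint X.dom ψ.bv := hBV.mono_right Finset.subset_union_right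
    have hfφ : φ.fv ⊆ X.dom := fun y hy => hfv (Finset.mem_union_left _ hy)
    have hfψ : ψ.fv ⊆ X.dom := fun y hy => hfv (Finset.mem_union_right _ hy)
    constructor
    · rintro ⟨Y, Z, hYd, hZd, hXa, hY, hZ⟩
      have hYeq := (ihφ Y hFO.1 hUφ (by rw [hYd]; exact hBφ) (by rw [hYd]; exact hfφ)).mp hY
      have hZeq := (ihψ Z hFO.2 hUψ (by rw [hZd]; exact hBψ) (by rw [hZd]; exact hfψ)).mp hZ
      have hYa : Y.assignments = {s | (∀ y ∉ X.dom, s y = default) ∧ φ.tsat 𝕄 s} := by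
        rw [← hYd]; exact congrArg Team.assignments hYeq
      have hZa : Z.assignments = {s | (∀ y ∉ X.dom, s y = default) ∧ ψ.tsat 𝕄 s} := by
        rw [← hZd]; exact congrArg Team.assignments hZeq
      refine Team.ext' rfl ?_
      rw [hXa, hYa, hZa]
      ext s
      simp only [SemVal, Set.mem_union, Set.mem_setOf_eq, MForm.tsat]
      tauto
    · intro hX
      refine ⟨SemVal 𝕄 X.dom φ, SemVal 𝕄 X.dom ψ, rfl, rfl, ?_,
        (ihφ (SemVal 𝕄 X.dom φ) hFO.1 hUφ hBφ hfφ).mpr rfl, (ihψ (SemVal 𝕄 X.dom ψ) hFO.2 hUψ hBψ hfψ).mpr rfl⟩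
      rw [congrArg Team.assignments hX]
      ext s
      simp only [SemVal, Set.mem_union, Set.mem_setOf_eq, MForm.tsat]
      tauto
  | ex x φ ih =>
    obtain ⟨⟨hxbv, hnφ⟩, hdisj⟩ := hUnt
    have hxX : x ∉ X.dom := fun h =>
      (Finset.disjoint_left.mp hBV h) (Finset.mem_insert_self x _)
    have hUφ : φ.untangled := by
      refine ⟨hnφ, Finset.disjoint_left.mpr fun {y} hyf hyb => ?_⟩
      have hyx : y ≠ x := fun h => hxbv (h ▸ hyb)
      exact (Finset.disjoint_left.mp hdisj (Finset.mem_erase.mpr ⟨hyx, hyf⟩))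
        (Finset.mem_insert_of_mem hyb)
    have hfvφ : φ.fv ⊆ insert x X.dom := by
      intro y hy
      by_cases hyx : y = x
      · exact hyx ▸ Finset.mem_insert_self x X.dom
      · exact Finset.mem_insert_of_mem (hfv (Finset.mem_erase.mpr ⟨hyx, hy⟩))
    have hbvins : Disjoint (insert x X.dom) φ.bv := by
      rw [Finset.disjoint_left]
      intro y hy hyb
      rcases Finset.mem_insert.mp hy with rfl | hy'
      · exact hxbv hyb
      · exact (Finset.disjoint_left.mp hBV hy') (Finset.mem_insert_of_mem hyb)
    constructor
    · rintro ⟨Y, hxY, hEq, hY⟩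
      have h1 : Y.dom.erase x = X.dom.erase x := congrArg Team.dom hEq
      rw [Finset.erase_eq_of_notMem hxX] at h1
      have hYdom : Y.dom = insert x X.dom := by
        rw [← h1, Finset.insert_erase hxY]
      have hYeq : Y = SemVal 𝕄 (insert x X.dom) φ := by
        rw [← hYdom]
        exact (ih Y hFO hUφ (by rw [hYdom]; exact hbvins) (by rw [hYdom]; exact hfvφ)).mp hY
      calc X = Team.eexists x X := (eexists_self X x hxX).symm
        _ = Team.eexists x Y := hEq.symm
        _ = Team.eexists x (SemVal 𝕄 (insert x X.dom) φ) := by rw [hYeq]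
        _ = SemVal 𝕄 X.dom (.ex x φ) := eexists_semval 𝕄 X.dom x hxX φ
    · intro hX
      refine ⟨SemVal 𝕄 (insert x X.dom) φ, Finset.mem_insert_self x _, ?_,
        (ih (SemVal 𝕄 (insert x X.dom) φ) hFO hUφ hbvins hfvφ).mpr rfl⟩
      rw [eexists_semval 𝕄 X.dom x hxX φ, eexists_self X x hxX]
      exact hX.symm
  | all x φ ih =>
    obtain ⟨⟨hxbv, hnφ⟩, hdisj⟩ := hUnt
    have hxX : x ∉ X.dom := fun h =>
      (Finset.disjoint_left.mp hBV h) (Finset.mem_insert_self x _)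
    have hUφ : φ.untangled := by
      refine ⟨hnφ, Finset.disjoint_left.mpr fun {y} hyf hyb => ?_⟩
      have hyx : y ≠ x := fun h => hxbv (h ▸ hyb)
      exact (Finset.disjoint_left.mp hdisj (Finset.mem_erase.mpr ⟨hyx, hyf⟩))
        (Finset.mem_insert_of_mem hyb)
    have hfvφ : φ.fv ⊆ insert x X.dom := by
      intro y hy
      by_cases hyx : y = x
      · exact hyx ▸ Finset.mem_insert_self x X.dom
      · exact Finset.mem_insert_of_mem (hfv (Finset.mem_erase.mpr ⟨hyx, hy⟩))
    have hbvins : Disjoint (insert x X.dom) φ.bv := by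
      rw [Finset.disjoint_left]
      intro y hy hyb
      rcases Finset.mem_insert.mp hy with rfl | hy'
      · exact hxbv hyb
      · exact (Finset.disjoint_left.mp hBV hy') (Finset.mem_insert_of_mem hyb)
    constructor
    · rintro ⟨Y, hxY, hEq, hY⟩
      have h1 : Y.dom.erase x = X.dom.erase x := congrArg Team.dom hEq
      rw [Finset.erase_eq_of_notMem hxX] at h1
      have hYdom : Y.dom = insert x X.dom := by
        rw [← h1, Finset.insert_erase hxY]
      have hYeq : Y = SemVal 𝕄 (insert x X.dom) φ := by
        rw [← hYdom]
        exact (ih Y hFO hUφ (by rw [hYdom]; exact hbvins) (by rw [hYdom]; exact hfvφ)).mp hY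
      calc X = Team.eexists x X := (eexists_self X x hxX).symm
        _ = Team.eforall x Y := hEq.symm
        _ = Team.eforall x (SemVal 𝕄 (insert x X.dom) φ) := by rw [hYeq]
        _ = SemVal 𝕄 X.dom (.all x φ) := eforall_semval 𝕄 X.dom x hxX φ
    · intro hX
      refine ⟨SemVal 𝕄 (insert x X.dom) φ, Finset.mem_insert_self x _, ?_,
        (ih (SemVal 𝕄 (insert x X.dom) φ) hFO hUφ hbvins hfvφ).mpr rfl⟩
      rw [eforall_semval 𝕄 X.dom x hxX φ, eexists_self X x hxX]
      exact hX.symm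

end Paper
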